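/- Let $T f = \sum_{m \ge 0,\, m \text{ even}} (\mathbb{E}_m f - \mathbb{E}_{m-1} f)$ (with $\mathbb{E}_{-1}=0$) and $E = \bigcup_{j \ge 0} (2^{-2j-1}, 2^{-2j})$. Then for every even $n \ge 0$, $(T\chi_{I_n}) \cdot \chi_E \ge \frac{1}{3} g_n \chi_E$ almost everywhere, where $I_n = (2^{-n-1},2^{-n})$ and $g_n = \sum_{k=0}^{\infty} 2^{-(n-k)_+} \chi_{I_k}$. -/

import Mathlib

open MeasureTheory Set

noncomputable section

def m01 : Measure ℝ := volume.restrict (Ioo (0:ℝ) 1)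

def rearr (x : ℝ → ℝ) (t : ℝ) : ℝ :=
  sInf {s : ℝ | 0 ≤ s ∧ m01 {u | s < |x u|} ≤ ENNReal.ofReal t}

def dil (s : ℝ) (y : ℝ → ℝ) (t : ℝ) : ℝ :=
  if t / s ∈ Icc (0:ℝ) 1 then y (t / s) else 0

def In (n : ℕ) : Set ℝ := Ioo (((2:ℝ)^(n+1))⁻¹) (((2:ℝ)^n)⁻¹)

def Jn (n : ℕ) : Set ℝ := Ioo 0 (((2:ℝ)^n)⁻¹)

def haarH (n : ℕ) : ℝ → ℝ := fun t => indicator (Jn (n+1)) 1 t - indicator (In n) 1 t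

def Eset : Set ℝ := ⋃ j : ℕ, In (2*j)

def hardyC (y : ℝ → ℝ) (t : ℝ) : ℝ := (1/t) * ∫ s in Ioo (0:ℝ) t, y s

def hardyCstar (y : ℝ → ℝ) (t : ℝ) : ℝ := ∫ s in Ioo t 1, y s / s

def calderon (y : ℝ → ℝ) (t : ℝ) : ℝ := hardyC y t + hardyCstar y t

def dyadicSA (m : ℕ) : MeasurableSpace ℝ :=
  MeasurableSpace.generateFrom
    {A | ∃ j : ℕ, 1 ≤ j ∧ j ≤ 2^m ∧ A = Ioo ((j-1 : ℝ)/2^m) ((j:ℝ)/2^m)}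

def condE (m : ℕ) (f : ℝ → ℝ) : ℝ → ℝ := m01[f | dyadicSA m]

def condEprev (m : ℕ) (f : ℝ → ℝ) : ℝ → ℝ := if m = 0 then 0 else condE (m-1) f

def Tmart (f : ℝ → ℝ) : ℝ → ℝ :=
  fun t => ∑' m : ℕ, if Even m then condE m f t - condEprev m f t else 0

def Teps (f : ℝ → ℝ) : ℝ → ℝ :=
  fun t => ∑' m : ℕ, (-1:ℝ)^m * (condE m f t - condEprev m f t)

instance : IsFiniteMeasure m01 := by
  constructor
  rw [m01, Measure.restrict_apply_univ]
  simp [Real.volume_Ioo]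

lemma dyadic_le (m : ℕ) : dyadicSA m ≤ Real.measurableSpace := by
  refine MeasurableSpace.generateFrom_le ?_
  rintro A ⟨j, -, -, rfl⟩
  exact measurableSet_Ioo

lemma dyadic_pi (m : ℕ) : IsPiSystem
    {A : Set ℝ | ∃ j : ℕ, 1 ≤ j ∧ j ≤ 2^m ∧ A = Ioo ((j-1 : ℝ)/2^m) ((j:ℝ)/2^m)} := by
  rintro A ⟨j, hj1, hj2, rfl⟩ B ⟨j', hj1', hj2', rfl⟩ hAB
  have : j = j' := by
    by_contra hne
    rcases Ne.lt_or_gt hne with h | h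
    · have hle : (j:ℝ) ≤ (j':ℝ) - 1 := by
        have : (j:ℝ) + 1 ≤ j' := by exact_mod_cast h
        linarith
      rcases hAB with ⟨x, ⟨-, hx2⟩, ⟨hx3, -⟩⟩
      have h2 : (0:ℝ) < 2^m := by positivity
      have : (j:ℝ)/2^m ≤ ((j':ℝ)-1)/2^m := by gcongr
      linarith
    · have hle : (j':ℝ) ≤ (j:ℝ) - 1 := by
        have : (j':ℝ) + 1 ≤ j := by exact_mod_cast h
        linarith
      rcases hAB with ⟨x, ⟨hx1, -⟩, ⟨-, hx4⟩⟩
      have h2 : (0:ℝ) < 2^m := by positivity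
      have : (j':ℝ)/2^m ≤ ((j:ℝ)-1)/2^m := by gcongr
      linarith
  subst this
  rw [inter_self]
  exact ⟨j, hj1, hj2, rfl⟩

lemma setIntegral_eq_on_dyadic (m : ℕ) {f g : ℝ → ℝ} (hf : Integrable f m01)
    (hg : Integrable g m01)
    (hbasic : ∀ A ∈ {A : Set ℝ | ∃ j : ℕ, 1 ≤ j ∧ j ≤ 2^m ∧
        A = Ioo ((j-1 : ℝ)/2^m) ((j:ℝ)/2^m)},
      ∫ x in A, g x ∂m01 = ∫ x in A, f x ∂m01)
    (htot : ∫ x, g x ∂m01 = ∫ x, f x ∂m01) :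
    ∀ s, MeasurableSet[dyadicSA m] s → ∫ x in s, g x ∂m01 = ∫ x in s, f x ∂m01 := by
  intro s hs
  refine MeasurableSpace.induction_on_inter (m := dyadicSA m)
    (C := fun s _ => ∫ x in s, g x ∂m01 = ∫ x in s, f x ∂m01) rfl (dyadic_pi m)
    ?_ hbasic ?_ ?_ s hs
  · simp
  · intro t ht hC
    have ht' : MeasurableSet t := dyadic_le m t ht
    have hgc := integral_add_compl ht' hg
    have hfc := integral_add_compl ht' hf
    linarith
  · intro u hdis hmeas hC
    have hmeas' : ∀ i, MeasurableSet (u i) := fun i => dyadic_le m _ (hmeas i)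
    rw [integral_iUnion hmeas' hdis hg.integrableOn,
       integral_iUnion hmeas' hdis hf.integrableOn]
    exact tsum_congr hC

lemma setIntegral_indicator_m01 (c : ℝ) {A B : Set ℝ} (hA : MeasurableSet A)
    (hB : MeasurableSet B) :
    ∫ t in A, B.indicator (fun _ => c) t ∂m01
      = (volume (B ∩ (A ∩ Ioo 0 1))).toReal * c := by
  rw [m01, Measure.restrict_restrict hA, integral_indicator_const c hB,
    measureReal_restrict_apply hB, smul_eq_mul, measureReal_def]

lemma integral_indicator_m01 (c : ℝ) {B : Set ℝ} (hB : MeasurableSet B) :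
    ∫ t, B.indicator (fun _ => c) t ∂m01 = (volume (B ∩ Ioo 0 1)).toReal * c := by
  rw [m01, integral_indicator_const c hB, measureReal_restrict_apply hB, smul_eq_mul,
    measureReal_def]

lemma In_subset_Jn {n m : ℕ} (h : m ≤ n) : In n ⊆ Jn m := by
  intro t ht
  have h1 : (0:ℝ) < ((2:ℝ)^(n+1))⁻¹ := by positivity
  have h2 : ((2:ℝ)^n)⁻¹ ≤ ((2:ℝ)^m)⁻¹ := by
    exact inv_anti₀ (by positivity) (pow_le_pow_right₀ one_le_two h)
  exact ⟨lt_trans h1 ht.1, lt_of_lt_of_le ht.2 h2⟩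

lemma Jn_subset_Ioo01 (m : ℕ) : Jn m ⊆ Ioo 0 1 := by
  intro t ht
  have h2 : ((2:ℝ)^m)⁻¹ ≤ 1 := by
    rw [inv_le_one_iff₀]
    right; exact one_le_pow₀ one_le_two
  exact ⟨ht.1, lt_of_lt_of_le ht.2 h2⟩

lemma In_subset_Ioo01 (n : ℕ) : In n ⊆ Ioo 0 1 :=
  subset_trans (In_subset_Jn (Nat.zero_le n)) (by simpa [Jn] using Jn_subset_Ioo01 0)

lemma In_measurable (n : ℕ) : MeasurableSet (In n) := measurableSet_Ioo
lemma Jn_measurable (m : ℕ) : MeasurableSet (Jn m) := measurableSet_Ioo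

lemma Jn_mem_gen (m : ℕ) : Jn m ∈ {A : Set ℝ | ∃ j : ℕ, 1 ≤ j ∧ j ≤ 2^m ∧
    A = Ioo ((j-1 : ℝ)/2^m) ((j:ℝ)/2^m)} := by
  refine ⟨1, le_refl _, Nat.one_le_two_pow, ?_⟩
  norm_num [Jn]

lemma vol_In (n : ℕ) : (volume (In n)).toReal = ((2:ℝ)^(n+1))⁻¹ := by
  rw [In, Real.volume_Ioo, ENNReal.toReal_ofReal (by
    rw [sub_nonneg]
    exact inv_anti₀ (by positivity) (pow_le_pow_right₀ one_le_two (Nat.le_succ n)))]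
  have h2 : (2:ℝ)^n ≠ 0 := by positivity
  rw [pow_succ]
  field_simp
  ring

lemma vol_Jn (m : ℕ) : (volume (Jn m)).toReal = ((2:ℝ)^m)⁻¹ := by
  rw [Jn, Real.volume_Ioo, ENNReal.toReal_ofReal (by norm_num)]
  ring

lemma condE_of_le {n m : ℕ} (h : m ≤ n) :
    (Jn m).indicator (fun _ => (((2:ℝ)^(n+1-m))⁻¹)) =ᵐ[m01]
      condE m ((In n).indicator 1) := by
  have hf : Integrable ((In n).indicator (1:ℝ→ℝ)) m01 :=
    (integrable_const 1).indicator (In_measurable n)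
  have hg : Integrable ((Jn m).indicator (fun _ => (((2:ℝ)^(n+1-m))⁻¹))) m01 :=
    (integrable_const _).indicator (Jn_measurable m)
  have hpow : ((2:ℝ)^(n+1-m))⁻¹ * ((2:ℝ)^m)⁻¹ = ((2:ℝ)^(n+1))⁻¹ := by
    rw [← mul_inv, ← pow_add]
    congr 2
    omega
  have hfind : (In n).indicator (1:ℝ→ℝ) = (In n).indicator (fun _ => (1:ℝ)) := rfl
  have htot : ∫ x, (Jn m).indicator (fun _ => (((2:ℝ)^(n+1-m))⁻¹)) x ∂m01
      = ∫ x, (In n).indicator (1:ℝ→ℝ) x ∂m01 := by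
    rw [hfind, integral_indicator_m01 _ (Jn_measurable m),
      integral_indicator_m01 _ (In_measurable n),
      inter_eq_left.2 (Jn_subset_Ioo01 m), inter_eq_left.2 (In_subset_Ioo01 n),
      vol_Jn, vol_In, mul_one, mul_comm, hpow]
  have hbasic : ∀ A ∈ {A : Set ℝ | ∃ j : ℕ, 1 ≤ j ∧ j ≤ 2^m ∧
      A = Ioo ((j-1 : ℝ)/2^m) ((j:ℝ)/2^m)},
      ∫ x in A, (Jn m).indicator (fun _ => (((2:ℝ)^(n+1-m))⁻¹)) x ∂m01
        = ∫ x in A, (In n).indicator (1:ℝ→ℝ) x ∂m01 := by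
    rintro A ⟨j, hj1, hj2, rfl⟩
    rw [hfind, setIntegral_indicator_m01 _ measurableSet_Ioo (Jn_measurable m),
      setIntegral_indicator_m01 _ measurableSet_Ioo (In_measurable n)]
    rcases eq_or_lt_of_le hj1 with rfl | hj1'
    · have hAeq : Ioo ((((1:ℕ):ℝ)-1)/2^m) (((1:ℕ):ℝ)/2^m) = Jn m := by
        norm_num [Jn, one_div]
      rw [hAeq, inter_eq_left.2 (Jn_subset_Ioo01 m), inter_self,
        inter_eq_left.2 (In_subset_Jn h), vol_Jn, vol_In, mul_one, mul_comm, hpow]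
    · have hj2' : (2:ℝ) ≤ (j:ℝ) := by exact_mod_cast hj1'
      have h2m : (0:ℝ) < 2^m := by positivity
      have hkey : ((2:ℝ)^m)⁻¹ ≤ ((j:ℝ)-1)/2^m := by
        rw [inv_eq_one_div]
        gcongr
        linarith
      have hJe : Jn m ∩ (Ioo ((j-1 : ℝ)/2^m) ((j:ℝ)/2^m) ∩ Ioo 0 1) = ∅ := by
        apply eq_empty_iff_forall_notMem.2
        rintro t ⟨⟨-, ht2⟩, ⟨ht3, -⟩, -⟩
        linarith
      have hIe : In n ∩ (Ioo ((j-1 : ℝ)/2^m) ((j:ℝ)/2^m) ∩ Ioo 0 1) = ∅ := by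
        apply eq_empty_iff_forall_notMem.2
        rintro t ⟨ht1, ht4⟩
        have := In_subset_Jn h ht1
        exact eq_empty_iff_forall_notMem.1 hJe t ⟨this, ht4⟩
      rw [hJe, hIe]
      simp
  exact ae_eq_condExp_of_forall_setIntegral_eq (dyadic_le m) hf
    (fun s _ _ => hg.integrableOn)
    (fun s hs _ => setIntegral_eq_on_dyadic m hf hg hbasic htot s hs)
    (StronglyMeasurable.aestronglyMeasurable
      (stronglyMeasurable_const.indicator
        (MeasurableSpace.measurableSet_generateFrom (Jn_mem_gen m))))

lemma condE_of_gt {n m : ℕ} (h : n < m) :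
    (In n).indicator (1:ℝ→ℝ) =ᵐ[m01] condE m ((In n).indicator 1) := by
  have hf : Integrable ((In n).indicator (1:ℝ→ℝ)) m01 :=
    (integrable_const 1).indicator (In_measurable n)
  have h2m : (0:ℝ) < 2^m := by positivity
  have key1 : ((2:ℝ)^(n+1))⁻¹ * 2^m = (2:ℝ)^(m-n-1) := by
    rw [inv_mul_eq_div, eq_comm, eq_div_iff (by positivity : ((2:ℝ)^(n+1)) ≠ 0),
      ← pow_add]
    congr 1
    omega
  have key2 : ((2:ℝ)^n)⁻¹ * 2^m = (2:ℝ)^(m-n) := by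
    rw [inv_mul_eq_div, eq_comm, eq_div_iff (by positivity : ((2:ℝ)^n) ≠ 0), ← pow_add]
    congr 1
    omega
  set U : Set ℝ := ⋃ j ∈ Finset.Ioc (2^(m-n-1)) ((2:ℕ)^(m-n)),
    Ioo (((j:ℝ)-1)/2^m) ((j:ℝ)/2^m) with hU
  have hUsub : U ⊆ In n := by
    intro t ht
    obtain ⟨j, hj, htj⟩ := mem_iUnion₂.1 ht
    rw [Finset.mem_Ioc] at hj
    have l1 : ((2:ℝ)^(m-n-1)) ≤ (j:ℝ) - 1 := by
      have h1n : 2^(m-n-1) + 1 ≤ j := hj.1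
      have : ((2^(m-n-1) + 1 : ℕ) : ℝ) ≤ (j:ℝ) := by exact_mod_cast h1n
      push_cast at this ⊢
      linarith
    have l2 : (j:ℝ) ≤ (2:ℝ)^(m-n) := by exact_mod_cast hj.2
    constructor
    · have : ((2:ℝ)^(n+1))⁻¹ ≤ ((j:ℝ)-1)/2^m := by
        rw [le_div_iff₀ h2m, key1]
        exact l1
      exact lt_of_le_of_lt this htj.1
    · have : (j:ℝ)/2^m ≤ ((2:ℝ)^n)⁻¹ := by
        rw [div_le_iff₀ h2m, key2]
        exact l2
      exact lt_of_lt_of_le htj.2 this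
  have hUmeas : MeasurableSet[dyadicSA m] U := by
    apply Finset.measurableSet_biUnion
    intro j hj
    rw [Finset.mem_Ioc] at hj
    have h1 : (1:ℕ) ≤ 2^(m-n-1) := Nat.one_le_two_pow
    have h2 : (2:ℕ)^(m-n) ≤ 2^m := Nat.pow_le_pow_right (by norm_num) (by omega)
    exact MeasurableSpace.measurableSet_generateFrom ⟨j, by omega, by omega, rfl⟩
  have hnull : m01 (range fun j : ℕ => (j:ℝ)/2^m) = 0 := by
    have hR : MeasurableSet (range fun j : ℕ => (j:ℝ)/2^m) :=
      (countable_range _).measurableSet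
    rw [m01, Measure.restrict_apply hR]
    exact measure_mono_null inter_subset_left ((countable_range _).measure_zero _)
  have hae : (In n).indicator (1:ℝ→ℝ) =ᵐ[m01] U.indicator (1:ℝ→ℝ) := by
    refine (measure_eq_zero_iff_ae_notMem.1 hnull).mono ?_
    intro t ht
    by_cases htU : t ∈ U
    · rw [indicator_of_mem htU, indicator_of_mem (hUsub htU)]
    by_cases htI : t ∈ In n
    swap
    · rw [indicator_of_notMem htI, indicator_of_notMem htU]
    exfalso
    apply htU
    have hx : 0 < t := (In_subset_Ioo01 n htI).1
    set k := ⌊t * 2^m⌋₊ with hk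
    have hk1 : (k:ℝ) ≤ t * 2^m := Nat.floor_le (by positivity)
    have hkne : (k:ℝ) ≠ t * 2^m := by
      intro he
      exact ht ⟨k, by rw [div_eq_iff (ne_of_gt h2m)]; exact he⟩
    have hklt : (k:ℝ) < t * 2^m := lt_of_le_of_ne hk1 hkne
    have hk2 : t * 2^m < (k:ℝ) + 1 := Nat.lt_floor_add_one _
    have hlow : 2^(m-n-1) ≤ k := by
      have hr : ((2:ℝ)^(m-n-1)) < (k:ℝ) + 1 :=
        calc ((2:ℝ)^(m-n-1)) = ((2:ℝ)^(n+1))⁻¹ * 2^m := key1.symm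
        _ < t * 2^m := mul_lt_mul_of_pos_right htI.1 h2m
        _ < (k:ℝ) + 1 := hk2
      have : (2^(m-n-1) : ℕ) < k + 1 := by exact_mod_cast hr
      omega
    have hhigh : k < 2^(m-n) := by
      have hr : (k:ℝ) < ((2:ℝ)^(m-n)) :=
        calc (k:ℝ) < t * 2^m := hklt
        _ < ((2:ℝ)^n)⁻¹ * 2^m := mul_lt_mul_of_pos_right htI.2 h2m
        _ = (2:ℝ)^(m-n) := key2
      exact_mod_cast hr
    refine mem_iUnion₂.2 ⟨k+1, Finset.mem_Ioc.2 ⟨by omega, by omega⟩, ?_, ?_⟩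
    · push_cast
      rw [div_lt_iff₀ h2m]
      linarith
    · rw [lt_div_iff₀ h2m]
      push_cast
      exact hk2
  exact ae_eq_condExp_of_forall_setIntegral_eq (dyadic_le m) hf
    (fun s _ _ => hf.integrableOn) (fun s hs _ => rfl)
    ⟨U.indicator 1, stronglyMeasurable_one.indicator hUmeas, hae⟩

lemma In_disj {k l : ℕ} (h : k < l) {t : ℝ} (hk : t ∈ In k) (hl : t ∈ In l) : False := by
  have h1 : ((2:ℝ)^l)⁻¹ ≤ ((2:ℝ)^(k+1))⁻¹ :=
    inv_anti₀ (by positivity) (pow_le_pow_right₀ one_le_two h)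
  have h2 := hl.2
  have h3 := hk.1
  linarith

theorem Tmart_indicator_lower_bound (n : ℕ) (hn : Even n) :
    ∀ᵐ t ∂m01,
      (1/3) * (∑' k : ℕ, (2:ℝ)^(-(max ((n:ℤ) - (k:ℤ)) 0)) * indicator (In k) 1 t)
          * indicator Eset 1 t
        ≤ Tmart (indicator (In n) 1) t * indicator Eset 1 t := by
  have H : ∀ᵐ t ∂m01, ∀ m : ℕ, condE m ((In n).indicator 1) t =
      if m ≤ n then ((Jn m).indicator (fun _ => ((2:ℝ)^(n+1-m))⁻¹) t)
      else ((In n).indicator (1:ℝ→ℝ) t) := by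
    rw [ae_all_iff]
    intro m
    by_cases hm : m ≤ n
    · filter_upwards [condE_of_le hm] with t ht
      rw [if_pos hm]
      exact ht.symm
    · filter_upwards [condE_of_gt (not_le.1 hm)] with t ht
      rw [if_neg hm]
      exact ht.symm
  filter_upwards [H] with t Ht
  by_cases htE : t ∈ Eset
  swap
  · rw [indicator_of_notMem htE, mul_zero, mul_zero]
  simp only [indicator_of_mem htE, Pi.one_apply, mul_one]
  obtain ⟨i, hti⟩ : ∃ i, t ∈ In (2*i) := by
    simpa [Eset, mem_iUnion] using htE
  have ht0 : 0 < t := (In_subset_Ioo01 _ hti).1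
  have hJ : ∀ m : ℕ, t ∈ Jn m ↔ m ≤ 2*i := by
    intro m
    constructor
    · intro hm
      by_contra hgt
      push_neg at hgt
      have h1 : ((2:ℝ)^m)⁻¹ ≤ ((2:ℝ)^(2*i+1))⁻¹ :=
        inv_anti₀ (by positivity) (pow_le_pow_right₀ one_le_two (by omega))
      have := hm.2
      have := hti.1
      linarith
    · intro hm
      refine ⟨ht0, lt_of_lt_of_le hti.2 ?_⟩
      exact inv_anti₀ (by positivity) (pow_le_pow_right₀ one_le_two hm)
  -- LHS evaluation
  have hother : ∀ k : ℕ, k ≠ 2*i →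
      (2:ℝ)^(-(max ((n:ℤ) - (k:ℤ)) 0)) * indicator (In k) 1 t = 0 := by
    intro k hk
    have : t ∉ In k := by
      intro htk
      rcases Nat.lt_or_ge k (2*i) with h | h
      · exact In_disj h htk hti
      · exact In_disj (by omega) hti htk
    rw [indicator_of_notMem this, mul_zero]
  rw [tsum_eq_single (2*i) hother]
  simp only [indicator_of_mem hti, Pi.one_apply, mul_one]
  -- RHS: reduce tsum to finite sum
  have hf : (indicator (In n) (1:ℝ→ℝ)) = (In n).indicator (1:ℝ→ℝ) := rfl
  have htail : ∀ m ∉ Finset.range (n+1),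
      (if Even m then condE m ((In n).indicator 1) t
        - condEprev m ((In n).indicator 1) t else 0) = 0 := by
    intro m hm
    rw [Finset.mem_range, not_lt] at hm
    by_cases hev : Even m
    · rw [if_pos hev]
      have hm0 : m ≠ 0 := by omega
      obtain ⟨a, ha⟩ := hn
      obtain ⟨b, hb⟩ := hev
      have hmn : ¬ m ≤ n := by omega
      have hm1 : ¬ m - 1 ≤ n := by omega
      have e1 := Ht m
      rw [if_neg hmn] at e1
      have e2 := Ht (m-1)
      rw [if_neg hm1] at e2
      simp only [condEprev, if_neg hm0]
      rw [e1, e2, sub_self]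
    · rw [if_neg hev]
  simp only [Tmart]
  rw [tsum_eq_sum htail]
  -- setup q
  set q := min i (n/2) with hq
  have hq2n : 2*q ≤ n := by
    obtain ⟨a, ha⟩ := hn
    omega
  have hq2i : 2*q ≤ 2*i := by omega
  -- LHS constant
  have hmaxeq : (2:ℝ)^(-(max ((n:ℤ) - ((2*i : ℕ) : ℤ)) 0)) = ((2:ℝ)^(n-2*q))⁻¹ := by
    have hcast : max ((n:ℤ) - ((2*i:ℕ):ℤ)) 0 = ((n - 2*q : ℕ) : ℤ) := by
      obtain ⟨a, ha⟩ := hn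
      push_cast
      omega
    rw [hcast, zpow_neg, zpow_natCast]
  rw [hmaxeq]
  -- nonnegativity of terms
  have hpos : ∀ m ∈ Finset.range (n+1),
      0 ≤ (if Even m then condE m ((In n).indicator 1) t
        - condEprev m ((In n).indicator 1) t else 0) := by
    intro m hm
    rw [Finset.mem_range] at hm
    by_cases hev : Even m
    swap
    · rw [if_neg hev]
    rw [if_pos hev]
    have hmn : m ≤ n := by omega
    have e1 := Ht m
    rw [if_pos hmn] at e1
    by_cases hm0 : m = 0
    · subst hm0
      have hprev : condEprev 0 ((In n).indicator 1) t = 0 := by simp [condEprev]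
      rw [hprev, sub_zero, e1]
      by_cases htJ : t ∈ Jn 0
      · simp only [indicator_of_mem htJ]
        positivity
      · simp only [indicator_of_notMem htJ]
        exact le_refl 0
    · have hm1 : m - 1 ≤ n := by omega
      have e2 := Ht (m-1)
      rw [if_pos hm1] at e2
      simp only [condEprev, if_neg hm0]
      rw [e1, e2]
      by_cases hle : m ≤ 2*i
      · rw [indicator_of_mem ((hJ m).2 hle),
          indicator_of_mem ((hJ (m-1)).2 (by omega))]
        rw [sub_nonneg]
        exact inv_anti₀ (by positivity) (pow_le_pow_right₀ one_le_two (by omega))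
      · obtain ⟨b, hb⟩ := hev
        have hnot1 : ¬ (m-1) ≤ 2*i := by omega
        rw [indicator_of_notMem (fun hmem => hle ((hJ m).1 hmem)),
          indicator_of_notMem (fun hmem => hnot1 ((hJ (m-1)).1 hmem)), sub_self]
  -- subset sum
  set B := (Finset.range (q+1)).image (fun j => 2*j) with hB
  have hBsub : B ⊆ Finset.range (n+1) := by
    intro x hx
    rw [hB, Finset.mem_image] at hx
    obtain ⟨j, hj, rfl⟩ := hx
    rw [Finset.mem_range] at hj ⊢
    omega
  have hstep1 : ∑ m ∈ B,
      (if Even m then condE m ((In n).indicator 1) t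
        - condEprev m ((In n).indicator 1) t else 0)
      ≤ ∑ m ∈ Finset.range (n+1),
      (if Even m then condE m ((In n).indicator 1) t
        - condEprev m ((In n).indicator 1) t else 0) :=
    Finset.sum_le_sum_of_subset_of_nonneg hBsub (fun m hm _ => hpos m hm)
  have hstep2 : ∑ m ∈ B,
      (if Even m then condE m ((In n).indicator 1) t
        - condEprev m ((In n).indicator 1) t else 0)
      = ∑ j ∈ Finset.range (q+1),
      (if Even (2*j) then condE (2*j) ((In n).indicator 1) t
        - condEprev (2*j) ((In n).indicator 1) t else 0) := by
    rw [hB, Finset.sum_image (fun a _ b _ hab => by omega)]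
  -- termwise lower bound
  have hstep3 : ∀ j ∈ Finset.range (q+1),
      ((2:ℝ)^(n+2))⁻¹ * (if j = 0 then 2 else (4:ℝ)^j)
      ≤ (if Even (2*j) then condE (2*j) ((In n).indicator 1) t
        - condEprev (2*j) ((In n).indicator 1) t else 0) := by
    intro j hj
    rw [Finset.mem_range] at hj
    have hjq : j ≤ q := by omega
    rw [if_pos (even_two_mul j)]
    have h2jn : 2*j ≤ n := by omega
    have h2ji : 2*j ≤ 2*i := by omega
    have e1 := Ht (2*j)
    rw [if_pos h2jn, indicator_of_mem ((hJ (2*j)).2 h2ji)] at e1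
    by_cases hj0 : j = 0
    · subst hj0
      have hprev : condEprev (2*0) ((In n).indicator 1) t = 0 := by simp [condEprev]
      rw [hprev, sub_zero]
      have heq : ((2:ℝ)^(n+2))⁻¹ * 2 = ((2:ℝ)^(n+1))⁻¹ := by
        rw [pow_succ]
        field_simp
      simp only [show 2*0 = 0 from rfl] at e1 ⊢
      rw [e1]
      simp only [Nat.sub_zero, if_pos rfl, if_true, heq, le_refl]
    · have hm0 : 2*j ≠ 0 := by omega
      have hm1 : 2*j - 1 ≤ n := by omega
      have e2 := Ht (2*j-1)
      rw [if_pos hm1, indicator_of_mem ((hJ (2*j-1)).2 (by omega))] at e2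
      simp only [condEprev, if_neg hm0]
      rw [e1, e2, if_neg hj0]
      have hexp : n + 1 - (2*j-1) = n + 2 - 2*j := by omega
      rw [hexp]
      have hdiff : ((2:ℝ)^(n+1-2*j))⁻¹ - ((2:ℝ)^(n+2-2*j))⁻¹ = ((2:ℝ)^(n+2-2*j))⁻¹ := by
        have h1 : (2:ℝ)^(n+2-2*j) = 2 * (2:ℝ)^(n+1-2*j) := by
          rw [← pow_succ']
          congr 1
          omega
        rw [h1]
        have h2 : ((2:ℝ)^(n+1-2*j)) ≠ 0 := by positivity
        field_simp
        ring
      rw [hdiff]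
      have h4 : (4:ℝ)^j * (2:ℝ)^(n+2-2*j) = (2:ℝ)^(n+2) := by
        rw [show (4:ℝ) = 2^2 by norm_num, ← pow_mul, ← pow_add]
        congr 1
        omega
      have : ((2:ℝ)^(n+2))⁻¹ * 4^j = ((2:ℝ)^(n+2-2*j))⁻¹ := by
        rw [← h4, mul_inv, mul_right_comm, inv_mul_cancel₀ (by positivity), one_mul]
      rw [this]
  have hstep4 : ∑ j ∈ Finset.range (q+1), ((2:ℝ)^(n+2))⁻¹ * (if j = 0 then 2 else (4:ℝ)^j)
      ≤ ∑ j ∈ Finset.range (q+1),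
      (if Even (2*j) then condE (2*j) ((In n).indicator 1) t
        - condEprev (2*j) ((In n).indicator 1) t else 0) :=
    Finset.sum_le_sum hstep3
  have hsum : ∑ j ∈ Finset.range (q+1), ((2:ℝ)^(n+2))⁻¹ * (if j = 0 then 2 else (4:ℝ)^j)
      = ((2:ℝ)^(n+2))⁻¹ * (((4:ℝ)^(q+1) - 1)/3 + 1) := by
    rw [← Finset.mul_sum]
    congr 1
    have hsplit : ∀ j : ℕ, (if j = 0 then (2:ℝ) else 4^j)
        = 4^j + (if j = 0 then (1:ℝ) else 0) := by
      intro j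
      by_cases h : j = 0 <;> simp [h] <;> norm_num
    simp_rw [hsplit]
    rw [Finset.sum_add_distrib, geom_sum_eq (by norm_num : (4:ℝ) ≠ 1),
      Finset.sum_ite_eq' (Finset.range (q+1)) 0 (fun _ => (1:ℝ))]
    norm_num
  have key : (1:ℝ)/3 * ((2:ℝ)^(n-2*q))⁻¹
      ≤ ((2:ℝ)^(n+2))⁻¹ * (((4:ℝ)^(q+1) - 1)/3 + 1) := by
    have hrel : (2:ℝ)^(n+2) = 2^(n-2*q) * (4:ℝ)^(q+1) := by
      rw [show (4:ℝ) = 2^2 by norm_num, ← pow_mul, ← pow_add]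
      congr 1
      omega
    set a := (2:ℝ)^(n-2*q) with hadef
    set b := (4:ℝ)^(q+1) with hbdef
    have ha : (0:ℝ) < a := by rw [hadef]; positivity
    have hb : (0:ℝ) < b := by rw [hbdef]; positivity
    have hb1 : (1:ℝ) ≤ b := one_le_pow₀ (by norm_num)
    rw [hrel, mul_inv, show (b - 1)/3 + 1 = (b+2)/3 by ring,
      mul_comm (1/3) a⁻¹, mul_assoc]
    apply mul_le_mul_of_nonneg_left _ (inv_nonneg.2 ha.le)
    rw [inv_mul_eq_div, div_div, div_le_div_iff₀ (by norm_num) (by positivity)]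
    linarith
  calc (1:ℝ)/3 * ((2:ℝ)^(n-2*q))⁻¹
      ≤ ((2:ℝ)^(n+2))⁻¹ * (((4:ℝ)^(q+1) - 1)/3 + 1) := key
    _ = ∑ j ∈ Finset.range (q+1), ((2:ℝ)^(n+2))⁻¹ * (if j = 0 then 2 else (4:ℝ)^j) :=
        hsum.symm
    _ ≤ ∑ j ∈ Finset.range (q+1),
        (if Even (2*j) then condE (2*j) ((In n).indicator 1) t
          - condEprev (2*j) ((In n).indicator 1) t else 0) := hstep4
    _ = ∑ m ∈ B,
        (if Even m then condE m ((In n).indicator 1) t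
          - condEprev m ((In n).indicator 1) t else 0) := hstep2.symm
    _ ≤ ∑ m ∈ Finset.range (n+1),
        (if Even m then condE m ((In n).indicator 1) t
          - condEprev m ((In n).indicator 1) t else 0) := hstep1
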